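/- For every integer n ≥ 1 and all real x, the n-th derivative of tanh satisfies |d^n/dx^n tanh(x)| < 2^n · n!. -/

import Mathlib

open Real Finset

lemma tanh_hasDerivAt (x : ℝ) : HasDerivAt Real.tanh (1 - Real.tanh x ^ 2) x := by
  have hc : Real.cosh x ≠ 0 := (Real.cosh_pos x).ne'
  have h : HasDerivAt (fun y => Real.sinh y / Real.cosh y)
      ((Real.cosh x * Real.cosh x - Real.sinh x * Real.sinh x) / Real.cosh x ^ 2) x :=
    (Real.hasDerivAt_sinh x).div (Real.hasDerivAt_cosh x) hc
  have heq : Real.tanh = fun y => Real.sinh y / Real.cosh y := by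
    funext y; exact Real.tanh_eq_sinh_div_cosh y
  have h' : HasDerivAt (fun y => Real.sinh y / Real.cosh y) (1 - Real.tanh x ^ 2) x := by
    convert h using 1
    rw [Real.tanh_eq_sinh_div_cosh]
    have h2 := Real.cosh_sq_sub_sinh_sq x
    field_simp
  exact h'.congr_of_eventuallyEq
    (Filter.Eventually.of_forall fun y => Real.tanh_eq_sinh_div_cosh y)

lemma abs_tanh_le_one (x : ℝ) : |Real.tanh x| ≤ 1 := by
  rw [Real.tanh_eq_sinh_div_cosh, abs_div, abs_of_pos (Real.cosh_pos x),
    div_le_one (Real.cosh_pos x)]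
  nlinarith [Real.cosh_sq_sub_sinh_sq x, abs_nonneg (Real.sinh x), sq_abs (Real.sinh x),
    Real.cosh_pos x, le_abs_self (Real.sinh x), neg_abs_le (Real.sinh x)]

lemma one_sub_tanh_sq_mem (x : ℝ) : 0 ≤ 1 - Real.tanh x ^ 2 ∧ 1 - Real.tanh x ^ 2 ≤ 1 := by
  have h := abs_tanh_le_one x
  constructor <;> nlinarith [sq_abs (Real.tanh x), abs_nonneg (Real.tanh x)]

lemma sum_tanh_hasDerivAt (N : ℕ) (c : ℕ → ℝ) (x : ℝ) :
    HasDerivAt (fun y => ∑ k ∈ range N, c k * Real.tanh y ^ k)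
      (∑ k ∈ range N, c k * (k * Real.tanh x ^ (k - 1) * (1 - Real.tanh x ^ 2))) x := by
  apply HasDerivAt.fun_sum
  intro k _
  exact ((tanh_hasDerivAt x).pow k).const_mul (c k)

/-- coefficients of the (n+1)-st derivative of tanh as a polynomial in tanh -/
noncomputable def co : ℕ → ℕ → ℝ
  | 0, k => if k = 0 then 1 else if k = 2 then -1 else 0
  | (n+1), k => ((k+1 : ℕ) : ℝ) * co n (k+1) - ((k-1 : ℕ) : ℝ) * co n (k-1)

lemma reindex (n : ℕ) (f : ℕ → ℝ) (h0 : f 0 = 0) (h1 : f (n+3) = 0) (h2 : f (n+4) = 0) :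
    ∑ k ∈ range (n+4), f (k+1) = ∑ k ∈ range (n+3), f k := by
  have h := Finset.sum_range_succ' f (n+4)
  rw [Finset.sum_range_succ f (n+4), Finset.sum_range_succ f (n+3)] at h
  rw [h0, h1, h2] at h
  linarith

lemma main_lemma (n : ℕ) :
    (∀ k, n + 3 ≤ k → co n k = 0) ∧
    (∀ x, iteratedDeriv (n+1) Real.tanh x = ∑ k ∈ range (n+3), co n k * Real.tanh x ^ k) ∧
    (∑ k ∈ range (n+3), |co n k| ≤ 2 ^ (n+1) * ((n+1).factorial : ℝ)) := by
  induction n with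
  | zero =>
    refine ⟨?_, ?_, ?_⟩
    · intro k hk
      simp only [co]
      rw [if_neg (by omega), if_neg (by omega)]
    · intro x
      rw [iteratedDeriv_one, (tanh_hasDerivAt x).deriv]
      simp [Finset.sum_range_succ, co]
      ring
    · simp [Finset.sum_range_succ, co]
      norm_num
  | succ n ih =>
    obtain ⟨hvan, hrep, hsum⟩ := ih
    have hvan' : ∀ k, n + 4 ≤ k → co (n+1) k = 0 := by
      intro k hk
      simp only [co]
      rw [hvan (k+1) (by omega), hvan (k-1) (by omega)]
      ring
    refine ⟨hvan', ?_, ?_⟩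
    · intro x
      have hid : iteratedDeriv (n+1+1) Real.tanh x
          = deriv (iteratedDeriv (n+1) Real.tanh) x := by
        rw [iteratedDeriv_succ]
      rw [hid]
      have hfun : iteratedDeriv (n+1) Real.tanh
          = fun y => ∑ k ∈ range (n+3), co n k * Real.tanh y ^ k := funext hrep
      rw [hfun, (sum_tanh_hasDerivAt (n+3) (co n) x).deriv]
      set t := Real.tanh x with ht
      have hA : ∑ k ∈ range (n+4), ((k+1:ℕ):ℝ) * co n (k+1) * t ^ k
          = ∑ k ∈ range (n+3), (k:ℝ) * co n k * t ^ (k-1) := by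
        have h := reindex n (fun j => (j:ℝ) * co n j * t ^ (j-1)) (by simp)
          (by simp [hvan (n+3) le_rfl]) (by simp [hvan (n+4) (by omega)])
        rw [← h]
        apply Finset.sum_congr rfl
        intro k _
        push_cast
        simp
      have hB : ∑ k ∈ range (n+4), ((k-1:ℕ):ℝ) * co n (k-1) * t ^ k
          = ∑ k ∈ range (n+3), (k:ℝ) * co n k * t ^ (k+1) := by
        rw [Finset.sum_range_succ' (fun k => ((k-1:ℕ):ℝ) * co n (k-1) * t ^ k) (n+3)]
        simp
      rw [show (∑ k ∈ range (n+1+3), co (n+1) k * t ^ k)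
          = ∑ k ∈ range (n+4), (((k+1:ℕ):ℝ) * co n (k+1) * t ^ k
              - ((k-1:ℕ):ℝ) * co n (k-1) * t ^ k) from
        Finset.sum_congr rfl (fun k _ => by simp only [co]; ring)]
      rw [Finset.sum_sub_distrib, hA, hB, ← Finset.sum_sub_distrib]
      apply Finset.sum_congr rfl
      intro k _
      rcases k with _ | k
      · simp
      · have hp : t ^ (k + 1 - 1) = t ^ k := by norm_num
        rw [hp]
        push_cast
        ring
    · have step1 : ∑ k ∈ range (n+4), |co (n+1) k|
          ≤ ∑ k ∈ range (n+4), (((k+1:ℕ):ℝ) * |co n (k+1)| + ((k-1:ℕ):ℝ) * |co n (k-1)|) := by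
        apply Finset.sum_le_sum
        intro k _
        simp only [co]
        refine (abs_sub _ _).trans ?_
        rw [abs_mul, abs_mul]
        have h1 : |((k+1:ℕ):ℝ)| = ((k+1:ℕ):ℝ) := abs_of_nonneg (by positivity)
        have h2 : |((k-1:ℕ):ℝ)| = ((k-1:ℕ):ℝ) := abs_of_nonneg (by positivity)
        rw [h1, h2]
      have hA : ∑ k ∈ range (n+4), ((k+1:ℕ):ℝ) * |co n (k+1)|
          = ∑ k ∈ range (n+3), (k:ℝ) * |co n k| := by
        have h := reindex n (fun j => (j:ℝ) * |co n j|) (by simp)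
          (by simp [hvan (n+3) le_rfl]) (by simp [hvan (n+4) (by omega)])
        rw [← h]
      have hB : ∑ k ∈ range (n+4), ((k-1:ℕ):ℝ) * |co n (k-1)|
          = ∑ k ∈ range (n+3), (k:ℝ) * |co n k| := by
        rw [Finset.sum_range_succ' (fun k => ((k-1:ℕ):ℝ) * |co n (k-1)|) (n+3)]
        simp
      have hT : ∑ k ∈ range (n+3), (k:ℝ) * |co n k|
          ≤ ((n:ℝ)+2) * ∑ k ∈ range (n+3), |co n k| := by
        rw [Finset.mul_sum]
        apply Finset.sum_le_sum
        intro k hk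
        have hk' : (k:ℝ) ≤ (n:ℝ)+2 := by
          have := Finset.mem_range.mp hk
          exact_mod_cast Nat.le_of_lt_succ (by omega)
        exact mul_le_mul_of_nonneg_right hk' (abs_nonneg _)
      calc ∑ k ∈ range (n+1+3), |co (n+1) k|
          ≤ ∑ k ∈ range (n+4), (((k+1:ℕ):ℝ) * |co n (k+1)| + ((k-1:ℕ):ℝ) * |co n (k-1)|) :=
            step1
        _ = (∑ k ∈ range (n+3), (k:ℝ) * |co n k|) + ∑ k ∈ range (n+3), (k:ℝ) * |co n k| := by
            rw [Finset.sum_add_distrib, hA, hB]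
        _ ≤ ((n:ℝ)+2) * (∑ k ∈ range (n+3), |co n k|)
              + ((n:ℝ)+2) * (∑ k ∈ range (n+3), |co n k|) := by linarith
        _ ≤ ((n:ℝ)+2) * (2 ^ (n+1) * ((n+1).factorial : ℝ))
              + ((n:ℝ)+2) * (2 ^ (n+1) * ((n+1).factorial : ℝ)) := by
            have hpos : (0:ℝ) ≤ (n:ℝ)+2 := by positivity
            have := mul_le_mul_of_nonneg_left hsum hpos
            linarith
        _ = 2 ^ (n+1+1) * ((n+1+1).factorial : ℝ) := by
            rw [Nat.factorial_succ (n+1), Nat.factorial_succ n]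
            push_cast
            ring

theorem abs_iteratedDeriv_tanh_lt (n : ℕ) (hn : 1 ≤ n) (x : ℝ) :
    |iteratedDeriv n Real.tanh x| < 2 ^ n * (n.factorial : ℝ) := by
  obtain ⟨h0, h1⟩ := one_sub_tanh_sq_mem x
  match n, hn with
  | 1, _ =>
    rw [iteratedDeriv_one, (tanh_hasDerivAt x).deriv]
    rw [abs_of_nonneg h0]
    norm_num
    linarith
  | (m+2), _ =>
    obtain ⟨hvan, hrep, hsum⟩ := main_lemma m
    have hid : iteratedDeriv (m+2) Real.tanh x
        = deriv (iteratedDeriv (m+1) Real.tanh) x := by rw [iteratedDeriv_succ]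
    have hfun : iteratedDeriv (m+1) Real.tanh
        = fun y => ∑ k ∈ range (m+3), co m k * Real.tanh y ^ k := funext hrep
    rw [hid, hfun, (sum_tanh_hasDerivAt (m+3) (co m) x).deriv]
    have habs : |∑ k ∈ range (m+3),
          co m k * (k * Real.tanh x ^ (k-1) * (1 - Real.tanh x ^ 2))|
        ≤ ∑ k ∈ range (m+3), (k:ℝ) * |co m k| := by
      refine (Finset.abs_sum_le_sum_abs _ _).trans ?_
      apply Finset.sum_le_sum
      intro k _
      rw [abs_mul]
      have hb : |(k:ℝ) * Real.tanh x ^ (k-1) * (1 - Real.tanh x ^ 2)| ≤ (k:ℝ) := by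
        rw [abs_mul, abs_mul]
        have e1 : |(k:ℝ)| = (k:ℝ) := abs_of_nonneg (by positivity)
        have e2 : |Real.tanh x ^ (k-1)| ≤ 1 := by
          rw [abs_pow]
          exact pow_le_one₀ (abs_nonneg _) (abs_tanh_le_one x)
        have e3 : |1 - Real.tanh x ^ 2| ≤ 1 := by
          rw [abs_of_nonneg h0]; exact h1
        calc |(k:ℝ)| * |Real.tanh x ^ (k-1)| * |1 - Real.tanh x ^ 2|
            ≤ (k:ℝ) * 1 * 1 := by
              rw [e1]
              apply mul_le_mul (mul_le_mul le_rfl e2 (abs_nonneg _) (by positivity)) e3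
                (abs_nonneg _) (by positivity)
          _ = (k:ℝ) := by ring
      calc |co m k| * |(k:ℝ) * Real.tanh x ^ (k-1) * (1 - Real.tanh x ^ 2)|
          ≤ |co m k| * (k:ℝ) := mul_le_mul_of_nonneg_left hb (abs_nonneg _)
        _ = (k:ℝ) * |co m k| := by ring
    have hT : ∑ k ∈ range (m+3), (k:ℝ) * |co m k|
        ≤ ((m:ℝ)+2) * ∑ k ∈ range (m+3), |co m k| := by
      rw [Finset.mul_sum]
      apply Finset.sum_le_sum
      intro k hk
      have hk' : (k:ℝ) ≤ (m:ℝ)+2 := by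
        have := Finset.mem_range.mp hk
        exact_mod_cast Nat.le_of_lt_succ (by omega)
      exact mul_le_mul_of_nonneg_right hk' (abs_nonneg _)
    have hS : ((m:ℝ)+2) * (∑ k ∈ range (m+3), |co m k|)
        ≤ ((m:ℝ)+2) * (2 ^ (m+1) * ((m+1).factorial : ℝ)) :=
      mul_le_mul_of_nonneg_left hsum (by positivity)
    have hfin : ((m:ℝ)+2) * (2 ^ (m+1) * ((m+1).factorial : ℝ))
        < 2 ^ (m+2) * ((m+2).factorial : ℝ) := by
      have hx : (0:ℝ) < ((m:ℝ)+2) * (2 ^ (m+1) * ((m+1).factorial : ℝ)) := by positivity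
      have he : (2:ℝ) ^ (m+2) * ((m+2).factorial : ℝ)
          = 2 * (((m:ℝ)+2) * (2 ^ (m+1) * ((m+1).factorial : ℝ))) := by
        rw [Nat.factorial_succ (m+1)]
        push_cast
        ring
      rw [he]
      linarith
    calc |∑ k ∈ range (m+3), co m k * (k * Real.tanh x ^ (k-1) * (1 - Real.tanh x ^ 2))|
        ≤ ∑ k ∈ range (m+3), (k:ℝ) * |co m k| := habs
      _ ≤ ((m:ℝ)+2) * ∑ k ∈ range (m+3), |co m k| := hT
      _ ≤ ((m:ℝ)+2) * (2 ^ (m+1) * ((m+1).factorial : ℝ)) := hS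
      _ < 2 ^ (m+2) * ((m+2).factorial : ℝ) := hfin
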